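/- Let d ≥ 3 and n ≥ 2 be integers. For every vertex y of the undirected de Bruijn graph B(d,n) there exists a vertex x with d(y,x) = n. -/

import Mathlib

/-- The undirected de Bruijn graph `B(d,n)`: vertices are strings of length `n`
over the alphabet `{0, ..., d-1}`, and two distinct strings `x`, `y` are adjacent
iff `x_{i+1} = y_i` for all valid `i`, or `y_{i+1} = x_i` for all valid `i`. -/
def deBruijnGraph (d n : ℕ) : SimpleGraph (Fin n → Fin d) where
  Adj x y := x ≠ y ∧
    ((∀ i : Fin n, ∀ h : (i : ℕ) + 1 < n, x ⟨(i : ℕ) + 1, h⟩ = y i) ∨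
     (∀ i : Fin n, ∀ h : (i : ℕ) + 1 < n, y ⟨(i : ℕ) + 1, h⟩ = x i))
  symm := ⟨fun x y ⟨hxy, h⟩ => ⟨hxy.symm, h.symm⟩⟩
  loopless := ⟨fun x ⟨hxx, _⟩ => hxx rfl⟩

/-- The ball of radius `t` around a vertex `x`. -/
def ball {V : Type*} (G : SimpleGraph V) (t : ℕ) (x : V) : Set V :=
  {y | G.dist x y ≤ t}

/-- A set `S` of vertices is a `t`-identifying code if every ball of radius `t`
meets `S`, and distinct vertices have distinct identifying sets `B_t(x) ∩ S`. -/
def IsIdentifyingCode {V : Type*} (G : SimpleGraph V) (t : ℕ) (S : Set V) : Prop :=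
  (∀ x : V, (ball G t x ∩ S).Nonempty) ∧
  ∀ x y : V, x ≠ y → ball G t x ∩ S ≠ ball G t y ∩ S

private lemma exists_third {d : ℕ} (hd : 3 ≤ d) (a b : Fin d) : ∃ c : Fin d, c ≠ a ∧ c ≠ b := by
  have h : ¬ (Finset.univ : Finset (Fin d)) ⊆ {a, b} := by
    intro h
    have h2 := Finset.card_le_card h
    have h3 : ({a, b} : Finset (Fin d)).card ≤ 2 := Finset.card_le_two
    simp [Finset.card_univ] at h2
    omega
  obtain ⟨c, hc⟩ := Finset.sdiff_nonempty.mpr h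
  simp [Finset.mem_sdiff] at hc
  exact ⟨c, hc.1, hc.2⟩

/-- Invariant along walks in the de Bruijn graph. -/
private def DBInv {d n : ℕ} (u w : Fin n → Fin d) (k : ℕ) : Prop :=
  ∃ a b t : ℕ, t ≤ a + b ∧ a + b + min (2*a + b - t) (b + t) ≤ k ∧
    ∀ j : ℕ, a ≤ j → j + b + 1 ≤ n → ∀ (hj : j < n) (hi : j + t - a < n),
      w ⟨j + t - a, hi⟩ = u ⟨j, hj⟩

private lemma inv_symm {d n : ℕ} {u w : Fin n → Fin d} {k : ℕ} (h : DBInv u w k) : DBInv w u k := by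
  obtain ⟨a, b, t, ht, hc, hag⟩ := h
  refine ⟨t, a + b - t, a, by omega, by omega, ?_⟩
  intro j' hja hjb hj' hi'
  have h1 := hag (j' + a - t) (by omega) (by omega) (by omega) (by omega)
  have e1 : ((⟨j' + a - t + t - a, by omega⟩ : Fin n) : ℕ) = j' := by simp; omega
  rw [show (⟨j' + a - t + t - a, by omega⟩ : Fin n) = ⟨j', hj'⟩ from Fin.ext e1] at h1
  rw [show (⟨j' + a - t, hi'⟩ : Fin n) = ⟨j' + a - t, by omega⟩ from rfl]
  exact h1.symm


private lemma fcong {d n : ℕ} (v : Fin n → Fin d) {p q : ℕ} (hp : p < n) (hq : q < n)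
    (h : p = q) : v ⟨p, hp⟩ = v ⟨q, hq⟩ := by subst h; rfl

private lemma inv_step {d n : ℕ} {u w w' : Fin n → Fin d} {k : ℕ}
    (hA : (deBruijnGraph d n).Adj w w') (h : DBInv u w k) : DBInv u w' (k + 1) := by
  obtain ⟨a, b, t, ht, hc, hag⟩ := h
  obtain ⟨-, hL | hR⟩ := hA
  · -- left shift: w ⟨i+1⟩ = w' i, i.e. w' i = w (i+1)
    by_cases h0 : t = 0
    · subst h0
      refine ⟨a + 1, b, 0, by omega, by omega, ?_⟩
      intro j hja hjb hj hi
      have e : w ⟨(j - (a+1)) + 1, by omega⟩ = w' ⟨j - (a+1), by omega⟩ :=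
        hL ⟨j - (a+1), by omega⟩ (show (j - (a+1)) + 1 < n by omega)
      have h1 : w ⟨j + 0 - a, by omega⟩ = u ⟨j, hj⟩ := hag j (by omega) (by omega) hj (by omega)
      calc w' ⟨j + 0 - (a+1), hi⟩ = w' ⟨j - (a+1), by omega⟩ := fcong w' _ _ (by omega)
        _ = w ⟨(j - (a+1)) + 1, by omega⟩ := e.symm
        _ = w ⟨j + 0 - a, by omega⟩ := fcong w _ _ (by omega)
        _ = u ⟨j, hj⟩ := h1
    · refine ⟨a, b, t - 1, by omega, by omega, ?_⟩
      intro j hja hjb hj hi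
      have e : w ⟨(j + t - 1 - a) + 1, by omega⟩ = w' ⟨j + t - 1 - a, by omega⟩ :=
        hL ⟨j + t - 1 - a, by omega⟩ (show (j + t - 1 - a) + 1 < n by omega)
      have h1 : w ⟨j + t - a, by omega⟩ = u ⟨j, hj⟩ := hag j hja hjb hj (by omega)
      calc w' ⟨j + (t-1) - a, hi⟩ = w' ⟨j + t - 1 - a, by omega⟩ := fcong w' _ _ (by omega)
        _ = w ⟨(j + t - 1 - a) + 1, by omega⟩ := e.symm
        _ = w ⟨j + t - a, by omega⟩ := fcong w _ _ (by omega)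
        _ = u ⟨j, hj⟩ := h1
  · -- right shift: w' ⟨i+1⟩ = w i
    by_cases hT : t < a + b
    · refine ⟨a, b, t + 1, by omega, by omega, ?_⟩
      intro j hja hjb hj hi
      have e : w' ⟨(j + t - a) + 1, by omega⟩ = w ⟨j + t - a, by omega⟩ :=
        hR ⟨j + t - a, by omega⟩ (show (j + t - a) + 1 < n by omega)
      have h1 : w ⟨j + t - a, by omega⟩ = u ⟨j, hj⟩ := hag j hja hjb hj (by omega)
      calc w' ⟨j + (t+1) - a, hi⟩ = w' ⟨(j + t - a) + 1, by omega⟩ := fcong w' _ _ (by omega)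
        _ = w ⟨j + t - a, by omega⟩ := e
        _ = u ⟨j, hj⟩ := h1
    · refine ⟨a, b + 1, t + 1, by omega, by omega, ?_⟩
      intro j hja hjb hj hi
      have e : w' ⟨(j + t - a) + 1, by omega⟩ = w ⟨j + t - a, by omega⟩ :=
        hR ⟨j + t - a, by omega⟩ (show (j + t - a) + 1 < n by omega)
      have h1 : w ⟨j + t - a, by omega⟩ = u ⟨j, hj⟩ := hag j hja (by omega) hj (by omega)
      calc w' ⟨j + (t+1) - a, hi⟩ = w' ⟨(j + t - a) + 1, by omega⟩ := fcong w' _ _ (by omega)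
        _ = w ⟨j + t - a, by omega⟩ := e
        _ = u ⟨j, hj⟩ := h1

private lemma inv_of_walk {d n : ℕ} {u w : Fin n → Fin d}
    (W : (deBruijnGraph d n).Walk u w) : DBInv u w W.length := by
  induction W with
  | nil =>
    refine ⟨0, 0, 0, le_rfl, by simp, ?_⟩
    intro j hja hjb hj hi
    exact fcong _ _ _ (by omega)
  | @cons v v' w hadj p ih =>
    rw [SimpleGraph.Walk.length_cons]
    exact inv_symm (inv_step hadj.symm (inv_symm ih))


private lemma walk_of_length_n {d n : ℕ} (hn : 2 ≤ n) (y x : Fin n → Fin d)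
    (hxy : x ⟨n-1, by omega⟩ ≠ y ⟨0, by omega⟩) :
    ∃ W : (deBruijnGraph d n).Walk y x, W.length = n := by
  set w : ℕ → Fin n → Fin d := fun k i =>
    if h : (i : ℕ) < k then x ⟨(i : ℕ) + (n - k), by omega⟩ else y ⟨(i : ℕ) - k, by omega⟩ with hw
  have hwlt : ∀ (k p : ℕ) (hp : p < n) (h : p < k), w k ⟨p, hp⟩ = x ⟨p + (n - k), by omega⟩ := by
    intro k p hp h
    exact dif_pos h
  have hwge : ∀ (k p : ℕ) (hp : p < n) (h : ¬ p < k), w k ⟨p, hp⟩ = y ⟨p - k, by omega⟩ := by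
    intro k p hp h
    exact dif_neg h
  have hw0 : w 0 = y := by
    funext i
    calc w 0 ⟨(i : ℕ), i.isLt⟩ = y ⟨(i : ℕ) - 0, by omega⟩ := hwge 0 _ i.isLt (by omega)
      _ = y i := fcong y _ _ (by omega)
  have hwn : w n = x := by
    funext i
    calc w n ⟨(i : ℕ), i.isLt⟩ = x ⟨(i : ℕ) + (n - n), by omega⟩ := hwlt n _ i.isLt i.isLt
      _ = x i := fcong x _ _ (by omega)
  have hadj : ∀ k, k < n → (deBruijnGraph d n).Adj (w k) (w (k+1)) := by
    intro k hk
    constructor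
    · intro heq
      have h1 := congrFun heq (⟨k, by omega⟩ : Fin n)
      rw [hwge k k (by omega) (by omega), hwlt (k+1) k (by omega) (by omega)] at h1
      apply hxy
      calc x ⟨n-1, by omega⟩ = x ⟨k + (n - (k+1)), by omega⟩ := fcong x _ _ (by omega)
        _ = y ⟨k - k, by omega⟩ := h1.symm
        _ = y ⟨0, by omega⟩ := fcong y _ _ (by omega)
    · right
      intro i h
      by_cases hik : (i : ℕ) < k
      · calc w (k+1) ⟨(i : ℕ) + 1, h⟩ = x ⟨((i : ℕ) + 1) + (n - (k+1)), by omega⟩ :=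
              hwlt (k+1) _ h (by omega)
          _ = x ⟨(i : ℕ) + (n - k), by omega⟩ := fcong x _ _ (by omega)
          _ = w k ⟨(i : ℕ), i.isLt⟩ := (hwlt k _ i.isLt hik).symm
      · calc w (k+1) ⟨(i : ℕ) + 1, h⟩ = y ⟨((i : ℕ) + 1) - (k+1), by omega⟩ :=
              hwge (k+1) _ h (by omega)
          _ = y ⟨(i : ℕ) - k, by omega⟩ := fcong y _ _ (by omega)
          _ = w k ⟨(i : ℕ), i.isLt⟩ := (hwge k _ i.isLt hik).symm
  have main : ∀ k, k ≤ n → ∃ W : (deBruijnGraph d n).Walk (w (n - k)) x, W.length = k := by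
    intro k
    induction k with
    | zero =>
      intro _
      rw [show n - 0 = n from rfl, hwn]
      exact ⟨SimpleGraph.Walk.nil, rfl⟩
    | succ k ih =>
      intro hk1
      obtain ⟨W, hW⟩ := ih (by omega)
      have hA := hadj (n - (k+1)) (by omega)
      rw [show n - (k+1) + 1 = n - k by omega] at hA
      exact ⟨SimpleGraph.Walk.cons hA W, by simp [hW]⟩
  have h := main n le_rfl
  rw [show n - n = 0 by omega, hw0] at h
  exact h

theorem exists_dist_n (d n : ℕ) (hd : 3 ≤ d) (hn : 2 ≤ n) (y : Fin n → Fin d) :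
    ∃ x : Fin n → Fin d, (deBruijnGraph d n).dist y x = n := by
  have hgex : ∀ i : Fin n, ∃ c : Fin d, c ≠ y ⟨n - 1 - (i : ℕ), by omega⟩ ∧
      c ≠ (if h : (i : ℕ) ≤ (n-1)/2 then y ⟨n - 2 - (i : ℕ), by omega⟩
           else y ⟨n - (i : ℕ), by omega⟩) :=
    fun i => exists_third hd _ _
  choose x hx1 hx2 using hgex
  have hP1 : ∀ (p : ℕ) (hp : p < n), x ⟨p, hp⟩ ≠ y ⟨n - 1 - p, by omega⟩ :=
    fun p hp => hx1 ⟨p, hp⟩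
  have hP2 : ∀ (p : ℕ) (hp : p < n) (h : p ≤ (n-1)/2), x ⟨p, hp⟩ ≠ y ⟨n - 2 - p, by omega⟩ := by
    intro p hp h
    have h2 := hx2 ⟨p, hp⟩
    rwa [dif_pos (show ((⟨p, hp⟩ : Fin n) : ℕ) ≤ (n-1)/2 from h)] at h2
  have hP3 : ∀ (p : ℕ) (hp : p < n) (h : ¬ p ≤ (n-1)/2), x ⟨p, hp⟩ ≠ y ⟨n - p, by omega⟩ := by
    intro p hp h
    have h2 := hx2 ⟨p, hp⟩
    rwa [dif_neg (show ¬ ((⟨p, hp⟩ : Fin n) : ℕ) ≤ (n-1)/2 from h)] at h2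
  obtain ⟨W0, hW0⟩ := walk_of_length_n hn y x
    (fun heq => hP1 (n-1) (by omega) (heq.trans (fcong y _ _ (by omega))))
  have hdle : (deBruijnGraph d n).dist y x ≤ n := le_of_le_of_eq (SimpleGraph.dist_le W0) hW0
  obtain ⟨P, hP⟩ := (SimpleGraph.Reachable.exists_walk_length_eq_dist ⟨W0⟩ :
    ∃ p : (deBruijnGraph d n).Walk y x, p.length = (deBruijnGraph d n).dist y x)
  have hinv := inv_of_walk P
  rw [hP] at hinv
  refine ⟨x, ?_⟩
  by_contra hne
  obtain ⟨a, b, t, ht, hc, hag⟩ := hinv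
  have hc' : a + b + min (2*a + b - t) (b + t) ≤ n - 1 := by omega
  by_cases hcase : t ≤ a
  · set j := (n - 1 + (a - t)) / 2 with hj
    have hj1 : a ≤ j := by omega
    have hj2 : j + b + 1 ≤ n := by omega
    have hj3 : j < n := by omega
    have hi : j + t - a < n := by omega
    have heq := hag j hj1 hj2 hj3 hi
    have hcase2 : j = n - 1 - (j + t - a) ∨ j = n - 2 - (j + t - a) := by omega
    have hile : j + t - a ≤ (n-1)/2 := by omega
    rcases hcase2 with h' | h'
    · exact hP1 _ hi (heq.trans (fcong y _ _ h'))
    · exact hP2 _ hi hile (heq.trans (fcong y _ _ h'))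
  · set i := (n + (t - a)) / 2 with hidef
    set j := i - (t - a) with hjdef
    have hj1 : a ≤ j := by omega
    have hj2 : j + b + 1 ≤ n := by omega
    have hj3 : j < n := by omega
    have hi : j + t - a < n := by omega
    have hij : j + t - a = i := by omega
    have heq := hag j hj1 hj2 hj3 hi
    have hcase2 : j = n - 1 - (j + t - a) ∨ (j = n - (j + t - a) ∧ ¬ (j + t - a) ≤ (n-1)/2) := by
      omega
    rcases hcase2 with h' | ⟨h', hgt⟩
    · exact hP1 _ hi (heq.trans (fcong y _ _ h'))
    · exact hP3 _ hi hgt (heq.trans (fcong y _ _ h'))
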